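/- Let k ≥ 1 and define d(p,q) := ρ(p^{−1}·q) for p, q ∈ ℂ^k × ℝ. Then d is a metric on ℂ^k × ℝ: d(p,q) ≥ 0 with d(p,q) = 0 if and only if p = q, d(p,q) = d(q,p), and d(p,q) ≤ d(p,w) + d(w,q) for all p, q, w. Moreover d is left-invariant, d(g·p, g·q) = d(p,q) for all g, and homogeneous with respect to the dilations: d(δ_r p, δ_r q) = r·d(p,q) for all r > 0. -/

import Mathlib

open MeasureTheory
open scoped ENNReal

noncomputable section

/-- The underlying space of the Heisenberg group ℍ_k : ℂ^k × ℝ. -/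
abbrev Hk (k : ℕ) := (Fin k → ℂ) × ℝ

/-- The Korányi gauge ρ(z,t) = (|z|⁴ + t²)^{1/4}, where |z|² = Σⱼ |zⱼ|². -/
def rhoK (k : ℕ) (v : Hk k) : ℝ :=
  ((∑ j, ‖v.1 j‖ ^ 2) ^ 2 + v.2 ^ 2) ^ ((1 : ℝ) / 4)

/-- The Heisenberg dilations δ_r(z,t) = (r z, r² t). -/
def dilK (k : ℕ) (r : ℝ) (v : Hk k) : Hk k := (r • v.1, r ^ 2 * v.2)

/-- The Korányi unit sphere S_ρ = {v : ρ(v) = 1}. -/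
def SK (k : ℕ) : Set (Hk k) := {v | rhoK k v = 1}

/-- The Heisenberg group law (z,t)·(z',t') = (z+z', t+t'+2 Im⟨z,z'⟩). -/
def hmul (k : ℕ) (p q : Hk k) : Hk k :=
  (p.1 + q.1, p.2 + q.2 + 2 * (∑ j, p.1 j * (starRingEnd ℂ) (q.1 j)).im)

/-- The Heisenberg group inverse (z,t)⁻¹ = (−z,−t). -/
def hinv (k : ℕ) (p : Hk k) : Hk k := (-p.1, -p.2)

/-- The left-invariant Korányi distance d(p,q) = ρ(p⁻¹·q). -/
def dK (k : ℕ) (p q : Hk k) : ℝ := rhoK k (hmul k (hinv k p) q)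

def AK (k : ℕ) (v : Hk k) : ℂ := ((∑ j, ‖v.1 j‖ ^ 2 : ℝ) : ℂ) + v.2 * Complex.I

lemma rhoK_eq_sqrt (k : ℕ) (v : Hk k) : rhoK k v = Real.sqrt (‖AK k v‖) := by
  have h0 : (0:ℝ) ≤ (∑ j, ‖v.1 j‖ ^ 2) ^ 2 + v.2 ^ 2 := by positivity
  rw [rhoK, AK, Complex.norm_def, Complex.normSq_add_mul_I, Real.sqrt_eq_rpow,
    Real.sqrt_eq_rpow, ← Real.rpow_mul h0]
  norm_num

lemma cs (k : ℕ) (z w : Fin k → ℂ) :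
    ‖∑ j, z j * (starRingEnd ℂ) (w j)‖ ≤
      Real.sqrt (∑ j, ‖z j‖ ^ 2) * Real.sqrt (∑ j, ‖w j‖ ^ 2) := by
  have h := norm_inner_le_norm (𝕜 := ℂ) ((WithLp.equiv 2 (Fin k → ℂ)).symm w)
    ((WithLp.equiv 2 (Fin k → ℂ)).symm z)
  rw [PiLp.inner_apply] at h
  simp only [RCLike.inner_apply, WithLp.equiv_symm_apply, PiLp.toLp_apply] at h
  rw [EuclideanSpace.norm_eq, EuclideanSpace.norm_eq] at h
  simp only [WithLp.equiv_symm_apply, PiLp.toLp_apply] at h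
  calc ‖∑ j, z j * (starRingEnd ℂ) (w j)‖
      = ‖∑ j, (starRingEnd ℂ) (w j) * z j‖ := by
        congr 1; exact Finset.sum_congr rfl fun j _ => mul_comm _ _
    _ ≤ _ := by
        rw [Finset.sum_congr rfl fun j _ => mul_comm ((starRingEnd ℂ) (w j)) (z j),
          mul_comm (√(∑ j, ‖z j‖ ^ 2))]; exact h

lemma AK_hmul (k : ℕ) (p q : Hk k) :
    AK k (hmul k p q) = AK k p + AK k q + 2 * ∑ j, p.1 j * (starRingEnd ℂ) (q.1 j) := by
  have hre : ∑ j, Complex.normSq (p.1 j + q.1 j) = ∑ j, Complex.normSq (p.1 j) +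
      ∑ j, Complex.normSq (q.1 j) + 2 * (∑ j, p.1 j * (starRingEnd ℂ) (q.1 j)).re := by
    rw [Complex.re_sum, Finset.mul_sum, ← Finset.sum_add_distrib, ← Finset.sum_add_distrib]
    exact Finset.sum_congr rfl fun j _ => Complex.normSq_add _ _
  apply Complex.ext
  · simpa [AK, hmul, Complex.sq_norm, Complex.add_re, Complex.mul_re] using hre
  · simp [AK, hmul, Complex.add_im, Complex.mul_im, ← Complex.ofReal_pow, Complex.ofReal_im]

lemma im_swap (k : ℕ) (z w : Fin k → ℂ) :
    (∑ j, w j * (starRingEnd ℂ) (z j)).im = -(∑ j, z j * (starRingEnd ℂ) (w j)).im := by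
  have : (∑ j, w j * (starRingEnd ℂ) (z j)) = (starRingEnd ℂ) (∑ j, z j * (starRingEnd ℂ) (w j)) := by
    rw [map_sum]
    exact Finset.sum_congr rfl fun j _ => by rw [map_mul, Complex.conj_conj, mul_comm]
  rw [this, Complex.conj_im]

lemma hmul_assoc (k : ℕ) (a b c : Hk k) : hmul k (hmul k a b) c = hmul k a (hmul k b c) := by
  simp only [hmul, Prod.mk.injEq, Pi.add_apply, add_mul, mul_add, map_add,
    Finset.sum_add_distrib, Complex.add_im]
  constructor
  · exact add_assoc _ _ _
  · ring

lemma hmul_left_inv (k : ℕ) (g : Hk k) : hmul k (hinv k g) g = ((0 : Fin k → ℂ), (0:ℝ)) := by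
  simp only [hmul, hinv, Prod.mk.injEq, neg_add_cancel, Pi.neg_apply, neg_mul, true_and]
  simp [Complex.mul_conj]

lemma hmul_right_inv (k : ℕ) (g : Hk k) : hmul k g (hinv k g) = ((0 : Fin k → ℂ), (0:ℝ)) := by
  simp only [hmul, hinv, Prod.mk.injEq, add_neg_cancel, Pi.neg_apply, mul_neg, true_and]
  simp [Complex.mul_conj]

lemma hmul_zero_left (k : ℕ) (q : Hk k) : hmul k ((0 : Fin k → ℂ), (0:ℝ)) q = q := by
  simp [hmul]

lemma hinv_hmul (k : ℕ) (a b : Hk k) : hinv k (hmul k a b) = hmul k (hinv k b) (hinv k a) := by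
  simp only [hinv, hmul, Prod.mk.injEq, neg_add_rev, true_and, Pi.neg_apply, neg_mul, mul_neg,
    map_neg, neg_neg]
  rw [show (∑ j, b.1 j * (starRingEnd ℂ) (a.1 j)).im = -(∑ j, a.1 j * (starRingEnd ℂ) (b.1 j)).im
    from im_swap k a.1 b.1]
  ring

lemma re_AK (k : ℕ) (v : Hk k) : (AK k v).re = ∑ j, ‖v.1 j‖ ^ 2 := by
  simp [AK, ← Complex.ofReal_pow]

lemma rhoK_nonneg (k : ℕ) (v : Hk k) : 0 ≤ rhoK k v := by
  rw [rhoK_eq_sqrt]; exact Real.sqrt_nonneg _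

lemma rhoK_hmul_le (k : ℕ) (p q : Hk k) :
    rhoK k (hmul k p q) ≤ rhoK k p + rhoK k q := by
  rw [rhoK_eq_sqrt, rhoK_eq_sqrt, rhoK_eq_sqrt]
  set a := ‖AK k p‖ with ha
  set b := ‖AK k q‖ with hb
  have ha0 : 0 ≤ a := norm_nonneg _
  have hb0 : 0 ≤ b := norm_nonneg _
  have hZ : ‖∑ j, p.1 j * (starRingEnd ℂ) (q.1 j)‖ ≤ Real.sqrt a * Real.sqrt b := by
    refine (cs k p.1 q.1).trans (mul_le_mul ?_ ?_ (Real.sqrt_nonneg _) (Real.sqrt_nonneg _)) <;>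
      refine Real.sqrt_le_sqrt ?_
    · rw [← re_AK]; exact Complex.re_le_norm _
    · rw [← re_AK]; exact Complex.re_le_norm _
  have h1 : ‖AK k (hmul k p q)‖ ≤ (Real.sqrt a + Real.sqrt b) ^ 2 := by
    rw [AK_hmul]
    calc ‖AK k p + AK k q + 2 * ∑ j, p.1 j * (starRingEnd ℂ) (q.1 j)‖
        ≤ ‖AK k p + AK k q‖ +
            ‖2 * ∑ j, p.1 j * (starRingEnd ℂ) (q.1 j)‖ := norm_add_le _ _
      _ ≤ a + b + 2 * (Real.sqrt a * Real.sqrt b) := by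
          rw [norm_mul]
          have := norm_add_le (AK k p) (AK k q)
          have h2 : ‖(2:ℂ)‖ = 2 := by norm_num
          rw [h2]
          linarith [hZ]
      _ = (Real.sqrt a + Real.sqrt b) ^ 2 := by
          rw [add_sq, Real.sq_sqrt ha0, Real.sq_sqrt hb0]; ring
  calc Real.sqrt (‖AK k (hmul k p q)‖)
      ≤ Real.sqrt ((Real.sqrt a + Real.sqrt b) ^ 2) := Real.sqrt_le_sqrt h1
    _ = Real.sqrt a + Real.sqrt b := Real.sqrt_sq (by positivity)

lemma rhoK_eq_zero_iff (k : ℕ) (v : Hk k) : rhoK k v = 0 ↔ v.1 = 0 ∧ v.2 = 0 := by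
  have h0 : (0:ℝ) ≤ (∑ j, ‖v.1 j‖ ^ 2) ^ 2 + v.2 ^ 2 := by positivity
  rw [rhoK, Real.rpow_eq_zero h0 (by norm_num)]
  constructor
  · intro h
    have h1 : (∑ j, ‖v.1 j‖ ^ 2) = 0 ∧ v.2 = 0 := by
      constructor
      · nlinarith [Finset.sum_nonneg (fun j (_ : j ∈ Finset.univ) =>
          sq_nonneg (‖v.1 j‖)), sq_nonneg v.2]
      · nlinarith [sq_nonneg (∑ j, ‖v.1 j‖ ^ 2)]
    refine ⟨funext fun j => ?_, h1.2⟩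
    have := (Finset.sum_eq_zero_iff_of_nonneg
      (fun j _ => sq_nonneg (‖v.1 j‖))).mp h1.1 j (Finset.mem_univ j)
    simpa [pow_eq_zero_iff] using this
  · rintro ⟨h1, h2⟩
    simp [h1, h2]

lemma rhoK_hinv (k : ℕ) (v : Hk k) : rhoK k (hinv k v) = rhoK k v := by
  simp [rhoK, hinv, neg_sq]

lemma rhoK_dil (k : ℕ) (r : ℝ) (hr : 0 < r) (v : Hk k) :
    rhoK k (dilK k r v) = r * rhoK k v := by
  have hS : ∑ j, ‖(r • v.1) j‖ ^ 2 = r ^ 2 * ∑ j, ‖v.1 j‖ ^ 2 := by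
    rw [Finset.mul_sum]
    refine Finset.sum_congr rfl fun j _ => ?_
    rw [Pi.smul_apply, Complex.real_smul, norm_mul, Complex.norm_real, Real.norm_eq_abs, mul_pow, sq_abs]
  rw [rhoK, rhoK, dilK]
  simp only [hS]
  rw [show (r ^ 2 * ∑ j, ‖v.1 j‖ ^ 2) ^ 2 + (r ^ 2 * v.2) ^ 2 =
    r ^ 4 * ((∑ j, ‖v.1 j‖ ^ 2) ^ 2 + v.2 ^ 2) by ring,
    Real.mul_rpow (by positivity) (by positivity), ← Real.rpow_natCast r 4,
    ← Real.rpow_mul hr.le]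
  norm_num

lemma dil_hmul (k : ℕ) (r : ℝ) (p q : Hk k) :
    hmul k (dilK k r p) (dilK k r q) = dilK k r (hmul k p q) := by
  simp only [hmul, dilK, Prod.mk.injEq, smul_add, true_and, Pi.smul_apply, Complex.real_smul,
    map_mul, Complex.conj_ofReal]
  have h : ∀ x, (↑r * p.1 x) * (↑r * (starRingEnd ℂ) (q.1 x)) =
      ((r ^ 2 : ℝ) : ℂ) * (p.1 x * (starRingEnd ℂ) (q.1 x)) := fun x => by push_cast; ring
  simp only [h, ← Finset.mul_sum, Complex.mul_im, Complex.ofReal_re, Complex.ofReal_im]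
  ring

lemma dil_hinv (k : ℕ) (r : ℝ) (v : Hk k) : hinv k (dilK k r v) = dilK k r (hinv k v) := by
  simp [hinv, dilK, mul_neg]

/-- `d(p,q) = ρ(p⁻¹·q)` is a left-invariant, dilation-homogeneous metric
on the Heisenberg group ℍ_k. -/
theorem stmt13 (k : ℕ) (hk : 1 ≤ k) :
    (∀ p q : Hk k, 0 ≤ dK k p q) ∧
    (∀ p q : Hk k, dK k p q = 0 ↔ p = q) ∧
    (∀ p q : Hk k, dK k p q = dK k q p) ∧
    (∀ p q w : Hk k, dK k p q ≤ dK k p w + dK k w q) ∧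
    (∀ g p q : Hk k, dK k (hmul k g p) (hmul k g q) = dK k p q) ∧
    (∀ r : ℝ, 0 < r → ∀ p q : Hk k, dK k (dilK k r p) (dilK k r q) = r * dK k p q) := by
  refine ⟨fun p q => rhoK_nonneg k _, fun p q => ?_, fun p q => ?_, fun p q w => ?_,
    fun g p q => ?_, fun r hr p q => ?_⟩
  · rw [dK, rhoK_eq_zero_iff]
    constructor
    · rintro ⟨h1, h2⟩
      simp only [hmul, hinv, Pi.neg_apply] at h1 h2
      have hq1 : p.1 = q.1 := neg_add_eq_zero.mp h1
      rw [← hq1] at h2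
      have him : (∑ j, -p.1 j * (starRingEnd ℂ) (p.1 j)).im = 0 := by
        simp [Complex.mul_conj]
      rw [him] at h2
      exact Prod.ext hq1 (by linarith)
    · rintro rfl
      have h := hmul_left_inv k p
      exact ⟨by rw [h], by rw [h]⟩
  · rw [dK, dK, ← rhoK_hinv k (hmul k (hinv k q) p), hinv_hmul]
    have h : hinv k (hinv k q) = q := by simp [hinv]
    rw [h]
  · have key : hmul k (hinv k p) q = hmul k (hmul k (hinv k p) w) (hmul k (hinv k w) q) := by
      rw [hmul_assoc, ← hmul_assoc k w, hmul_right_inv, hmul_zero_left]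
    simp only [dK]
    rw [key]
    exact rhoK_hmul_le k _ _
  · simp only [dK]
    rw [hinv_hmul, hmul_assoc, ← hmul_assoc k (hinv k g), hmul_left_inv, hmul_zero_left]
  · simp only [dK]
    rw [dil_hinv, dil_hmul, rhoK_dil k r hr]

end
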